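/- Let K be a commutative ring, G a finite group, and X a G-set. Then the module of coinvariants K[X]_G and the module of invariants K[X]^G of the permutation module K[X] are isomorphic as K-modules. -/

import Mathlib

open MulAction Finsupp

section Aux

variable (K : Type*) [CommRing K] (G : Type*) [Group G] [Fintype G]
    (X : Type*) [MulAction G X]

local notation "Q" => Quotient (MulAction.orbitRel G X)

-- coinvariant side
noncomputable def coinvToQ : (X →₀ K) →ₗ[K] (Q →₀ K) :=
  Finsupp.lmapDomain K K (Quotient.mk _)

noncomputable def qToFree : (Q →₀ K) →ₗ[K] (X →₀ K) :=
  Finsupp.lmapDomain K K Quotient.out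

variable {K G X}

lemma key_mem (f : X →₀ K) :
    Finsupp.mapDomain (fun x : X => (Quotient.mk (MulAction.orbitRel G X) x).out) f - f ∈
      Submodule.span K
        {m | ∃ (σ : G) (g : X →₀ K), m = (Representation.ofMulAction K G X σ (MonoidAlgebra.ofCoeff g)).coeff - g} := by
  induction f using Finsupp.induction with
  | zero => simp
  | single_add a b g ha hb ih =>
    rw [Finsupp.mapDomain_add, Finsupp.mapDomain_single]
    have h2 : (Quotient.mk (MulAction.orbitRel G X) a).out ∈ MulAction.orbit G a :=
      MulAction.orbitRel_apply.mp (Quotient.mk_out a)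
    obtain ⟨σ, hσ⟩ := h2
    dsimp only at hσ
    have : Finsupp.single (Quotient.mk (MulAction.orbitRel G X) a).out b -
        Finsupp.single a b ∈ Submodule.span K
        {m | ∃ (σ : G) (g : X →₀ K), m = (Representation.ofMulAction K G X σ (MonoidAlgebra.ofCoeff g)).coeff - g} := by
      apply Submodule.subset_span
      exact ⟨σ, Finsupp.single a b, by rw [MonoidAlgebra.ofCoeff_single, Representation.ofMulAction_single,
        MonoidAlgebra.coeff_single, hσ]⟩
    have := Submodule.add_mem _ this ih
    convert this using 1
    abel

end Aux

theorem stmt_9 (K : Type*) [CommRing K] (G : Type*) [Group G] [Fintype G]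
    (X : Type*) [MulAction G X] :
    Nonempty (((X →₀ K) ⧸ Submodule.span K
        {m | ∃ (σ : G) (f : X →₀ K), m = (Representation.ofMulAction K G X σ (MonoidAlgebra.ofCoeff f)).coeff - f})
      ≃ₗ[K] (Representation.ofMulAction K G X).invariants) := by
  classical
  set S := Submodule.span K
      {m | ∃ (σ : G) (f : X →₀ K), m = (Representation.ofMulAction K G X σ (MonoidAlgebra.ofCoeff f)).coeff - f} with hS
  -- coinvariants ≃ (Q →₀ K)
  have hker : S ≤ LinearMap.ker (coinvToQ K G X) := by
    rw [hS, Submodule.span_le]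
    rintro m ⟨σ, f, rfl⟩
    simp only [SetLike.mem_coe, LinearMap.mem_ker, map_sub, sub_eq_zero]
    show Finsupp.mapDomain _ (Finsupp.mapDomain (σ • ·) f) = Finsupp.mapDomain _ f
    rw [← Finsupp.mapDomain_comp]
    congr 1
    funext x
    exact Quotient.sound ⟨σ, rfl⟩
  let e1 : ((X →₀ K) ⧸ S) ≃ₗ[K] (Quotient (MulAction.orbitRel G X) →₀ K) :=
    LinearEquiv.ofLinear (Submodule.liftQ S (coinvToQ K G X) hker)
      (S.mkQ ∘ₗ qToFree K G X)
      (by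
        apply Finsupp.lhom_ext
        intro o k
        simp only [LinearMap.comp_apply, LinearMap.id_apply]
        show Submodule.liftQ S (coinvToQ K G X) hker
          (S.mkQ (qToFree K G X (Finsupp.single o k))) = Finsupp.single o k
        rw [Submodule.mkQ_apply, Submodule.liftQ_apply]
        show coinvToQ K G X (Finsupp.mapDomain Quotient.out (Finsupp.single o k)) = _
        rw [Finsupp.mapDomain_single]
        show Finsupp.mapDomain _ (Finsupp.single o.out k) = _
        rw [Finsupp.mapDomain_single, Quotient.out_eq])
      (by
        apply Submodule.linearMap_qext
        apply LinearMap.ext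
        intro f
        simp only [LinearMap.comp_apply, Submodule.mkQ_apply, Submodule.liftQ_apply,
          LinearMap.id_apply]
        rw [Submodule.Quotient.eq]
        have heq : qToFree K G X (coinvToQ K G X f) =
            Finsupp.mapDomain
              (fun x : X => (Quotient.mk (MulAction.orbitRel G X) x).out) f := by
          show Finsupp.mapDomain _ (Finsupp.mapDomain _ f) = _
          rw [← Finsupp.mapDomain_comp]
          rfl
        rw [heq]
        exact key_mem f)
  -- invariants ≃ (Q →₀ K)
  -- invariant functions are constant on orbits
  have hconst : ∀ (f : X →₀ K), MonoidAlgebra.ofCoeff f ∈ (Representation.ofMulAction K G X).invariants →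
      ∀ (σ : G) (x : X), f (σ • x) = f x := by
    intro f hf σ x
    have := congrArg (fun m => MonoidAlgebra.coeff m (σ • x)) (hf σ)
    simp only [Representation.coeff_ofMulAction, inv_smul_smul, MonoidAlgebra.coeff_ofCoeff] at this
    exact this.symm
  let ind : (Quotient (MulAction.orbitRel G X) →₀ K) → (X →₀ K) := fun c =>
    Finsupp.onFinset
      (c.support.biUnion fun o => (Set.finite_range (fun g : G => g • o.out)).toFinset)
      (fun x => c (Quotient.mk _ x))
      (by
        intro x hx
        rw [Finset.mem_biUnion]
        refine ⟨Quotient.mk _ x, Finsupp.mem_support_iff.2 hx, ?_⟩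
        rw [Set.Finite.mem_toFinset]
        have : (Quotient.mk (MulAction.orbitRel G X) x).out ∈ MulAction.orbit G x :=
          MulAction.orbitRel_apply.mp (Quotient.mk_out x)
        obtain ⟨σ, hσ⟩ := this
        dsimp only at hσ
        exact ⟨σ⁻¹, by dsimp only; rw [← hσ, inv_smul_smul]⟩)
  have ind_apply : ∀ c x, ind c x = c (Quotient.mk _ x) := fun _ _ => rfl
  have ind_inv : ∀ c, MonoidAlgebra.ofCoeff (ind c) ∈ (Representation.ofMulAction K G X).invariants := by
    intro c σ
    ext x
    rw [Representation.coeff_ofMulAction, MonoidAlgebra.coeff_ofCoeff, ind_apply, ind_apply]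
    congr 1
    exact Quotient.sound ⟨σ⁻¹, rfl⟩
  let Φ : (Representation.ofMulAction K G X).invariants →
      (Quotient (MulAction.orbitRel G X) →₀ K) := fun f =>
    Finsupp.onFinset ((f : MonoidAlgebra K X).coeff.support.image (Quotient.mk _))
      (fun o => (f : MonoidAlgebra K X).coeff o.out)
      (by
        intro o ho
        rw [Finset.mem_image]
        exact ⟨o.out, Finsupp.mem_support_iff.2 ho, Quotient.out_eq o⟩)
  have Φ_apply : ∀ f o, Φ f o = (f : MonoidAlgebra K X).coeff o.out := fun _ _ => rfl
  let e2 : (Quotient (MulAction.orbitRel G X) →₀ K) ≃ₗ[K]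
      (Representation.ofMulAction K G X).invariants :=
    { toFun := fun c => ⟨MonoidAlgebra.ofCoeff (ind c), ind_inv c⟩
      invFun := Φ
      map_add' := by
        intro c d
        ext x
        simp only [AddMemClass.mk_add_mk, Finsupp.coe_add, Pi.add_apply]
        simp only [MonoidAlgebra.coeff_add, MonoidAlgebra.coeff_ofCoeff, Finsupp.add_apply, ind_apply]
      map_smul' := by
        intro k c
        ext x
        simp only [RingHom.id_apply, SetLike.mk_smul_mk, Finsupp.coe_smul, Pi.smul_apply]
        simp only [MonoidAlgebra.coeff_smul, MonoidAlgebra.coeff_ofCoeff, Finsupp.smul_apply, ind_apply]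
      left_inv := by
        intro c
        ext o
        rw [Φ_apply]
        show ind c o.out = c o
        rw [ind_apply, Quotient.out_eq]
      right_inv := by
        intro f
        ext x
        show ind (Φ f) x = (f : MonoidAlgebra K X).coeff x
        rw [ind_apply, Φ_apply]
        have : (Quotient.mk (MulAction.orbitRel G X) x).out ∈ MulAction.orbit G x :=
          MulAction.orbitRel_apply.mp (Quotient.mk_out x)
        obtain ⟨σ, hσ⟩ := this
        dsimp only at hσ
        rw [← hσ]
        exact hconst (f : MonoidAlgebra K X).coeff f.2 σ x }
  exact ⟨e1.trans e2⟩
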